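/- Let F be a field, N, p, m, n positive integers, and suppose a linear code for distributed matrix multiplication with parameters p, m, n achieves recovery threshold K < N: i.e., there are vectors a_i in F^{pm}, b_i in F^{pn} for i in {0,...,N-1} and for each K-subset S of {0,...,N-1} a decoding function d_S such that d_S({(alpha . a_i)(beta . b_i)}_{i in S}) = alpha^T beta for all alpha in F^{p x m} and beta in F^{p x n} (identifying matrices with vectors). Then K >= pm + pn - 1. -/

import Mathlib

open Matrix Finset

section Infra

variable {F : Type*} [Field F]

/-- Decodability: every `K`-subset of workers determines `Φ α β` from the products. -/
def Dec (F : Type*) [Field F] {ι V W Z : Type*} [Fintype ι] (K : ℕ)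
    (fa : ι → V → F) (fb : ι → W → F) (Φ : V → W → Z) : Prop :=
  ∀ S : Finset ι, S.card = K → ∃ d : ({i : ι // i ∈ S} → F) → Z,
    ∀ α β, (d fun i => fa i.1 α * fb i.1 β) = Φ α β

lemma Dec.comp {ι V W Z V' W' : Type*} [Fintype ι] {K : ℕ}
    {fa : ι → V → F} {fb : ι → W → F} {Φ : V → W → Z}
    (h : Dec F K fa fb Φ) (ρV : V' → V) (ρW : W' → W) :
    Dec F K (fun i x => fa i (ρV x)) (fun i y => fb i (ρW y))
      (fun x y => Φ (ρV x) (ρW y)) := by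
  intro S hS
  obtain ⟨d, hd⟩ := h S hS
  exact ⟨d, fun x y => hd (ρV x) (ρW y)⟩

lemma Dec.post {ι V W Z Z' : Type*} [Fintype ι] {K : ℕ}
    {fa : ι → V → F} {fb : ι → W → F} {Φ : V → W → Z}
    (h : Dec F K fa fb Φ) (G : Z → Z') :
    Dec F K fa fb (fun x y => G (Φ x y)) := by
  intro S hS
  obtain ⟨d, hd⟩ := h S hS
  exact ⟨fun v => G (d v), fun x y => congrArg G (hd x y)⟩

lemma Dec.swap {ι V W Z : Type*} [Fintype ι] {K : ℕ}
    {fa : ι → V → F} {fb : ι → W → F} {Φ : V → W → Z}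
    (h : Dec F K fa fb Φ) :
    Dec F K fb fa (fun y x => Φ x y) := by
  intro S hS
  obtain ⟨d, hd⟩ := h S hS
  refine ⟨d, fun y x => ?_⟩
  have : (fun i : {i : ι // i ∈ S} => fb i.1 y * fa i.1 x)
      = fun i : {i : ι // i ∈ S} => fa i.1 x * fb i.1 y := by
    funext i; exact mul_comm _ _
  rw [this]; exact hd x y

lemma Dec.restrict {ι V W Z V' W' : Type*} [Fintype ι] [DecidableEq ι] {K t : ℕ}
    {fa : ι → V → F} {fb : ι → W → F} {Φ : V → W → Z}
    (h : Dec F K fa fb Φ) (P : Finset ι) (hP : P.card = t) (htK : t ≤ K)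
    (ρV : V' → V) (ρW : W' → W)
    (hzero : ∀ i ∈ P, ∀ x y, fa i (ρV x) * fb i (ρW y) = 0) :
    Dec F (K - t) (fun (i : {i : ι // i ∉ P}) x => fa i.1 (ρV x))
      (fun i y => fb i.1 (ρW y)) (fun x y => Φ (ρV x) (ρW y)) := by
  intro S' hS'
  have hdisj : Disjoint (S'.map ⟨Subtype.val, Subtype.val_injective⟩) P := by
    rw [Finset.disjoint_left]
    rintro x hx hxP
    rcases Finset.mem_map.mp hx with ⟨j, _, rfl⟩
    exact j.2 hxP
  have hScard : ((S'.map ⟨Subtype.val, Subtype.val_injective⟩) ∪ P).card = K := by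
    rw [Finset.card_union_of_disjoint hdisj, Finset.card_map, hS', hP]
    omega
  obtain ⟨d, hd⟩ := h _ hScard
  have hmem : ∀ (i : ι), i ∈ (S'.map ⟨Subtype.val, Subtype.val_injective⟩) ∪ P →
      ∀ h : i ∉ P, (⟨i, h⟩ : {i : ι // i ∉ P}) ∈ S' := by
    intro i hiS h
    rcases Finset.mem_union.mp hiS with hx | hx
    · rcases Finset.mem_map.mp hx with ⟨j, hj, rfl⟩
      exact hj
    · exact absurd hx h
  refine ⟨fun vals => d fun i => if h : i.1 ∈ P then 0 else vals ⟨⟨i.1, h⟩, hmem i.1 i.2 h⟩, ?_⟩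
  intro x y
  have hfun : (fun i : {i // i ∈ (S'.map ⟨Subtype.val, Subtype.val_injective⟩) ∪ P} =>
        if h : i.1 ∈ P then (0 : F) else fa i.1 (ρV x) * fb i.1 (ρW y))
      = fun i => fa i.1 (ρV x) * fb i.1 (ρW y) := by
    funext i
    by_cases h : i.1 ∈ P
    · rw [dif_pos h, hzero i.1 h x y]
    · rw [dif_neg h]
  exact (congrArg d hfun).trans (hd (ρV x) (ρW y))

/-- If a vector kills everything by dot product, it is zero. -/
lemma dot_eq_zero_all {q : ℕ} (v : Fin q → F) (h : ∀ x, v ⬝ᵥ x = 0) : v = 0 := by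
  funext l
  have := h (Pi.single l 1)
  rwa [dotProduct_single, mul_one] at this

lemma dot_eq_zero_all' {q : ℕ} (v : Fin q → F) (h : ∀ x, x ⬝ᵥ v = 0) : v = 0 := by
  funext l
  have := h (Pi.single l 1)
  rwa [single_dotProduct, one_mul] at this

/-- Anything orthogonal to the kernel of the functional `⟨v,·⟩` is a multiple of `v`. -/
lemma perp_of_ker {q : ℕ} (v z : Fin q → F) (j : Fin q) (hv : v j ≠ 0)
    (h : ∀ x, v ⬝ᵥ x = 0 → z ⬝ᵥ x = 0) : z = (z j / v j) • v := by
  funext l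
  have hx : v ⬝ᵥ (Pi.single l (v j) - Pi.single j (v l)) = 0 := by
    rw [dotProduct_sub, dotProduct_single, dotProduct_single]; ring
  have hz := h _ hx
  rw [dotProduct_sub, dotProduct_single, dotProduct_single, sub_eq_zero] at hz
  have : z l = z j / v j * v l := by
    field_simp
    linear_combination hz
  simpa using this

/-- The "section of a hyperplane" matrix: columns form a parametrization of `ker ⟨v,·⟩`. -/
def piv {q : ℕ} (v : Fin (q + 1) → F) (j : Fin (q + 1)) : Matrix (Fin (q + 1)) (Fin q) F :=
  Matrix.of fun r c => if r = j then -(v (j.succAbove c)) / v j else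
    if r = j.succAbove c then 1 else 0

lemma piv_mulVec_pivot {q : ℕ} (v : Fin (q + 1) → F) (j : Fin (q + 1)) (x : Fin q → F) :
    (piv v j *ᵥ x) j = ∑ c, -(v (j.succAbove c)) / v j * x c := by
  simp [piv, Matrix.mulVec, dotProduct]

lemma piv_mulVec_succAbove {q : ℕ} (v : Fin (q + 1) → F) (j : Fin (q + 1)) (x : Fin q → F)
    (c : Fin q) : (piv v j *ᵥ x) (j.succAbove c) = x c := by
  simp only [piv, Matrix.mulVec, dotProduct, Matrix.of_apply]
  rw [Finset.sum_eq_single c]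
  · rw [if_neg (Fin.succAbove_ne j c), if_pos rfl, one_mul]
  · intro c' _ hc'
    rw [if_neg (Fin.succAbove_ne j c), if_neg, zero_mul]
    exact fun hcon => hc' (Fin.succAbove_right_injective hcon).symm
  · intro hc; exact absurd (Finset.mem_univ c) hc

lemma piv_dot {q : ℕ} (v : Fin (q + 1) → F) (j : Fin (q + 1)) (hv : v j ≠ 0) (x : Fin q → F) :
    v ⬝ᵥ (piv v j *ᵥ x) = 0 := by
  rw [dotProduct, Fin.sum_univ_succAbove (fun r => v r * (piv v j *ᵥ x) r) j]
  simp only [piv_mulVec_pivot, piv_mulVec_succAbove]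
  rw [Finset.mul_sum, ← Finset.sum_add_distrib]
  apply Finset.sum_eq_zero
  intro c _
  field_simp
  ring
lemma piv_section {q : ℕ} (v : Fin (q + 1) → F) (j : Fin (q + 1)) (hv : v j ≠ 0)
    (w : Fin (q + 1) → F) (hw : v ⬝ᵥ w = 0) :
    piv v j *ᵥ (fun c => w (j.succAbove c)) = w := by
  funext r
  by_cases hr : r = j
  · rw [hr, piv_mulVec_pivot]
    have hsum : ∑ c, v (j.succAbove c) * w (j.succAbove c) = -(v j * w j) := by
      rw [dotProduct, Fin.sum_univ_succAbove (fun r => v r * w r) j] at hw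
      linear_combination hw
    have : ∑ c, -(v (j.succAbove c)) / v j * w (j.succAbove c)
        = (∑ c, -(v (j.succAbove c) * w (j.succAbove c))) / v j := by
      rw [Finset.sum_div]
      exact Finset.sum_congr rfl fun c _ => by ring
    rw [this, Finset.sum_neg_distrib, hsum, neg_neg, mul_div_cancel_left₀ _ hv]
  · obtain ⟨c, rfl⟩ := Fin.exists_succAbove_eq hr
    rw [piv_mulVec_succAbove]

lemma dot_piv_assoc {a b c : ℕ} (P : Matrix (Fin a) (Fin b) F) (M : Matrix (Fin a) (Fin a) F)
    (Q : Matrix (Fin a) (Fin c) F) (x : Fin b → F) (y : Fin c → F) :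
    (P *ᵥ x) ⬝ᵥ (M *ᵥ (Q *ᵥ y)) = x ⬝ᵥ ((Pᵀ * M * Q) *ᵥ y) := by
  rw [show P *ᵥ x = x ᵥ* Pᵀ from (vecMul_transpose _ _).symm, dotProduct_mulVec,
    vecMul_vecMul, dotProduct_mulVec, vecMul_vecMul, ← dotProduct_mulVec]

/-- Linear functionals on `Fin q → F` are dot products. -/
lemma lin_eq_dot {q : ℕ} (A : (Fin q → F) →ₗ[F] F) (x : Fin q → F) :
    A x = x ⬝ᵥ (fun j => A (fun j' => if j = j' then 1 else 0)) := by
  rw [LinearMap.pi_apply_eq_sum_univ A x]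
  simp [dotProduct, smul_eq_mul]
/-- From a family of functionals with trivial joint kernel one can select `p` of them
(injectively) still having trivial joint kernel. -/
lemma select {p : ℕ} {ι : Type*} [Fintype ι] (φ : ι → (Fin p → F) →ₗ[F] F)
    (h : ∀ z, (∀ i, φ i z = 0) → z = 0) :
    ∃ τ : Fin p → ι, Function.Injective τ ∧ ∀ z, (∀ j, φ (τ j) z = 0) → z = 0 := by
  classical
  have hspan : Submodule.span F (Set.range φ) = ⊤ := by
    apply Submodule.span_eq_top_of_ne_zero
    intro z hz0
    by_contra hcon
    push_neg at hcon
    exact hz0 (h z fun i => hcon (φ i) ⟨i, rfl⟩)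
  obtain ⟨t, hts, htsp, hli⟩ := exists_linearIndependent F (Set.range φ)
  rw [hspan] at htsp
  have htfin : t.Finite := hli.setFinite
  haveI := htfin.fintype
  let bas : Module.Basis t F ((Fin p → F) →ₗ[F] F) :=
    Module.Basis.mk hli (by rw [Subtype.range_coe]; exact le_of_eq htsp.symm)
  have hcard : Fintype.card t = p := by
    have h1 := Module.finrank_eq_card_basis bas
    have h2 : Module.finrank F (Module.Dual F (Fin p → F)) = p := by
      rw [Subspace.dual_finrank_eq, Module.finrank_fintype_fun_eq_card, Fintype.card_fin]
    exact h1.symm.trans h2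
  let e : Fin p ≃ t := (Fintype.equivFinOfCardEq hcard).symm
  have hmem : ∀ x : t, (x : (Fin p → F) →ₗ[F] F) ∈ Set.range φ := fun x => hts x.2
  refine ⟨fun j => (hmem (e j)).choose, ?_, ?_⟩
  · intro j j' hjj
    have h1 : φ ((hmem (e j)).choose) = (e j : (Fin p → F) →ₗ[F] F) := (hmem (e j)).choose_spec
    have h2 : φ ((hmem (e j')).choose) = (e j' : (Fin p → F) →ₗ[F] F) :=
      (hmem (e j')).choose_spec
    apply e.injective
    apply Subtype.coe_injective
    show ((e j : (Fin p → F) →ₗ[F] F)) = ((e j' : (Fin p → F) →ₗ[F] F))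
    rw [← h1, ← h2]
    exact congrArg φ hjj
  · intro z hz
    have hsub : t ⊆ {f : (Fin p → F) →ₗ[F] F | f z = 0} := by
      intro g hgt
      have h1 : φ ((hmem (e (e.symm ⟨g, hgt⟩))).choose)
          = ((e (e.symm ⟨g, hgt⟩)) : (Fin p → F) →ₗ[F] F) :=
        (hmem (e (e.symm ⟨g, hgt⟩))).choose_spec
    -- φ (τ (e.symm ⟨g, hgt⟩)) = g
      have h2 := hz (e.symm ⟨g, hgt⟩)
      rw [h1] at h2
      rw [Equiv.apply_symm_apply] at h2
      exact h2
    have hker : Submodule.span F t ≤ LinearMap.ker (Module.Dual.eval F (Fin p → F) z) := by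
      rw [Submodule.span_le]
      intro g hgt
      simp only [SetLike.mem_coe, LinearMap.mem_ker]
      exact hsub hgt
    have hall : ∀ f : Module.Dual F (Fin p → F), f z = 0 := by
      intro f
      have : f ∈ LinearMap.ker (Module.Dual.eval F (Fin p → F) z) := by
        apply hker; rw [htsp]; trivial
      simpa using this
    exact (Module.forall_dual_apply_eq_zero_iff F z).mp hall
lemma Dec.congr_phi {ι V W Z : Type*} [Fintype ι] {K : ℕ}
    {fa : ι → V → F} {fb : ι → W → F} {Φ : V → W → Z}
    (h : Dec F K fa fb Φ) (Φ' : V → W → Z) (hΦ : ∀ x y, Φ x y = Φ' x y) :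
    Dec F K fa fb Φ' := by
  intro S hS
  obtain ⟨d, hd⟩ := h S hS
  exact ⟨d, fun α β => (hd α β).trans (hΦ α β)⟩

/-- The inner-product case: computing `α ⬝ᵥ M β` for invertible `M` from products of
linear functionals, with every `K`-subset decodable, forces `K ≥ 2p - 1`. -/
theorem lemA (p : ℕ) :
    ∀ (ι : Type u_sel) [Fintype ι] [DecidableEq ι] (K : ℕ), K < Fintype.card ι →
    ∀ (M : Matrix (Fin p) (Fin p) F), IsUnit M.det →
    ∀ (A B : ι → (Fin p → F) →ₗ[F] F),
    Dec F K (fun i α => A i α) (fun i β => B i β) (fun α β => α ⬝ᵥ (M *ᵥ β)) →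
    2 * p ≤ K + 1 := by
  induction p with
  | zero => intro ι _ _ K _ M _ A B _; omega
  | succ p IH =>
    intro ι _ _ K hK M hM A B hdec
    obtain ⟨a, hA⟩ : ∃ a : ι → Fin (p + 1) → F, ∀ i x, A i x = x ⬝ᵥ a i :=
      ⟨fun i j => A i (fun j' => if j = j' then 1 else 0), fun i x => lin_eq_dot (A i) x⟩
    obtain ⟨b, hB⟩ : ∃ b : ι → Fin (p + 1) → F, ∀ i x, B i x = x ⬝ᵥ b i :=
      ⟨fun i j => B i (fun j' => if j = j' then 1 else 0), fun i x => lin_eq_dot (B i) x⟩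
    have claimA : ∀ S : Finset ι, S.card = K → ∀ α0, (∀ i ∈ S, A i α0 = 0) → α0 = 0 := by
      intro S hS α0 h0
      obtain ⟨d, hd⟩ := hdec S hS
      have hzero : ∀ β, α0 ⬝ᵥ (M *ᵥ β) = 0 := by
        intro β
        have e1 := hd α0 β
        have e0 := hd 0 β
        have heq : (fun i : {i // i ∈ S} => A i.1 α0 * B i.1 β)
            = fun i : {i // i ∈ S} => A i.1 (0 : Fin (p + 1) → F) * B i.1 β := by
          funext i; rw [h0 i.1 i.2, map_zero]
        rw [heq, e0] at e1
        simp only [zero_dotProduct] at e1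
        exact e1.symm
      have h1 : ∀ β, (α0 ᵥ* M) ⬝ᵥ β = 0 := fun β => by
        rw [← dotProduct_mulVec]; exact hzero β
      have h2 : α0 ᵥ* M = 0 := dot_eq_zero_all _ h1
      have h3 : α0 = (α0 ᵥ* M) ᵥ* M⁻¹ := by
        rw [vecMul_vecMul, Matrix.mul_nonsing_inv _ hM, vecMul_one]
      rw [h3, h2, zero_vecMul]
    have claimB : ∀ S : Finset ι, S.card = K → ∀ β0, (∀ i ∈ S, B i β0 = 0) → β0 = 0 := by
      intro S hS β0 h0
      obtain ⟨d, hd⟩ := hdec S hS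
      have hzero : ∀ α, α ⬝ᵥ (M *ᵥ β0) = 0 := by
        intro α
        have e1 := hd α β0
        have e0 := hd α 0
        have heq : (fun i : {i // i ∈ S} => A i.1 α * B i.1 β0)
            = fun i : {i // i ∈ S} => A i.1 α * B i.1 (0 : Fin (p + 1) → F) := by
          funext i; rw [h0 i.1 i.2, map_zero]
        rw [heq, e0] at e1
        simp only [mulVec_zero, dotProduct_zero] at e1
        exact e1.symm
      have h2 : M *ᵥ β0 = 0 := dot_eq_zero_all' _ hzero
      have h3 : β0 = M⁻¹ *ᵥ (M *ᵥ β0) := by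
        rw [mulVec_mulVec, Matrix.nonsing_inv_mul _ hM, one_mulVec]
      rw [h3, h2, mulVec_zero]
    have hK1 : 1 ≤ K := by
      by_contra h0
      push_neg at h0
      have hS : (∅ : Finset ι).card = K := by rw [Finset.card_empty]; omega
      have hz := claimB ∅ hS (Pi.single 0 1) (fun i hi => absurd hi (Finset.notMem_empty i))
      have h1 := congrFun hz 0
      simp at h1
    rcases Nat.eq_zero_or_pos p with rfl | hp1
    · omega
    have hK2 : 2 ≤ K := by
      rcases Nat.lt_or_ge K 2 with hlt | hge
      swap
      · exact hge
      have hKeq : K = 1 := by omega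
      have hne : Nonempty ι := Fintype.card_pos_iff.mp (by omega)
      obtain ⟨i⟩ := hne
      have hS : ({i} : Finset ι).card = K := by rw [Finset.card_singleton, hKeq]
      exfalso
      by_cases hai : a i = 0
      · have hz := claimA {i} hS (Pi.single 0 1) ?_
        · exact absurd (congrFun hz 0) (by simp)
        · intro i' hi'
          rw [Finset.mem_singleton] at hi'
          subst hi'
          rw [hA, hai, dotProduct_zero]
      · obtain ⟨js, hjs⟩ := Function.ne_iff.mp hai
        obtain ⟨jt, hjt⟩ : ∃ jt, jt ≠ js :=
          Fintype.exists_ne_of_one_lt_card (by rw [Fintype.card_fin]; omega) js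
        have hker : A i (Pi.single jt (a i js) - Pi.single js (a i jt)) = 0 := by
          rw [hA, sub_dotProduct, single_dotProduct, single_dotProduct]; ring
        have hz := claimA {i} hS (Pi.single jt (a i js) - Pi.single js (a i jt))
          (fun i' hi' => by rw [Finset.mem_singleton] at hi'; subst hi'; exact hker)
        have hcontra := congrFun hz jt
        have : a i js = 0 := by
          simpa [Pi.single_eq_same, Pi.single_eq_of_ne hjt] using hcontra
        exact hjs this
    obtain ⟨S0, hS0sub, hS0c⟩ := Finset.exists_subset_card_eq
      (show K ≤ (Finset.univ : Finset ι).card by rw [Finset.card_univ]; omega)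
    have hbex : ∃ i1, b i1 ≠ 0 := by
      by_contra hno
      push_neg at hno
      have hz := claimB S0 hS0c (Pi.single 0 1)
        (fun i hi => by rw [hB, hno, dotProduct_zero])
      exact absurd (congrFun hz 0) (by simp)
    obtain ⟨i1, hb1⟩ := hbex
    obtain ⟨j1, hj1⟩ := Function.ne_iff.mp hb1
    set u := (b i1) ᵥ* M⁻¹ with hu
    have hfind : ∃ i0 ∈ Finset.univ.erase i1, A i0 u ≠ 0 := by
      by_contra hno
      push_neg at hno
      have hcard : K ≤ (Finset.univ.erase i1).card := by
        rw [Finset.card_erase_of_mem (Finset.mem_univ i1), Finset.card_univ]; omega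
      obtain ⟨S1, hS1sub, hS1c⟩ := Finset.exists_subset_card_eq hcard
      have hu0 := claimA S1 hS1c u (fun i hi => hno i (hS1sub hi))
      have hb : b i1 = u ᵥ* M := by
        rw [hu, vecMul_vecMul, Matrix.nonsing_inv_mul _ hM, vecMul_one]
      rw [hu0, zero_vecMul] at hb
      exact hb1 hb
    obtain ⟨i0, hi0mem, hA0u⟩ := hfind
    have hne01 : i0 ≠ i1 := Finset.ne_of_mem_erase hi0mem
    have hua : u ⬝ᵥ a i0 ≠ 0 := by rw [hA] at hA0u; exact hA0u
    have ha0 : a i0 ≠ 0 := by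
      intro hcon; rw [hcon, dotProduct_zero] at hua; exact hua rfl
    obtain ⟨j0, hj0⟩ := Function.ne_iff.mp ha0
    have hj0' : a i0 j0 ≠ 0 := hj0
    have hj1' : b i1 j1 ≠ 0 := hj1
    -- the reduction
    have hM'inj : ∀ y, ((piv (a i0) j0)ᵀ * M * piv (b i1) j1) *ᵥ y = 0 → y = 0 := by
      intro y hy
      set PV := piv (a i0) j0 with hPV
      set QW := piv (b i1) j1 with hQW
      set z := M *ᵥ (QW *ᵥ y) with hzdef
      have hzdot : ∀ w, a i0 ⬝ᵥ w = 0 → z ⬝ᵥ w = 0 := by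
        intro w hw
        have h2 := piv_section (a i0) j0 hj0' w hw
        have h3 : (PV *ᵥ (fun c => w (j0.succAbove c))) ⬝ᵥ z = 0 := by
          rw [hzdef, dot_piv_assoc, hy, dotProduct_zero]
        rw [h2] at h3
        rw [dotProduct_comm]
        exact h3
      have hz := perp_of_ker (a i0) z j0 hj0' hzdot
      have h4 : M⁻¹ *ᵥ z = QW *ᵥ y := by
        rw [hzdef, mulVec_mulVec, Matrix.nonsing_inv_mul _ hM, one_mulVec]
      have hQy : QW *ᵥ y = (z j0 / a i0 j0) • (M⁻¹ *ᵥ a i0) := by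
        rw [← h4]
        conv_lhs => rw [hz]
        rw [mulVec_smul]
      have hbz : b i1 ⬝ᵥ (QW *ᵥ y) = 0 := piv_dot (b i1) j1 hj1' y
      rw [hQy, dotProduct_smul, smul_eq_mul] at hbz
      have hbma : b i1 ⬝ᵥ (M⁻¹ *ᵥ a i0) = u ⬝ᵥ a i0 := by
        rw [dotProduct_mulVec, ← hu]
      rw [hbma] at hbz
      have hc : z j0 / a i0 j0 = 0 := by
        rcases mul_eq_zero.mp hbz with h | h
        · exact h
        · exact absurd h hua
      have hQy0 : QW *ᵥ y = 0 := by rw [hQy, hc, zero_smul]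
      funext c'
      have hyc := congrFun hQy0 (j1.succAbove c')
      rw [piv_mulVec_succAbove] at hyc
      exact hyc
    have hM'det : IsUnit ((piv (a i0) j0)ᵀ * M * (piv (b i1) j1)).det := by
      rw [← Matrix.isUnit_iff_isUnit_det, ← Matrix.mulVec_injective_iff_isUnit]
      intro x y hxy
      have hs : ((piv (a i0) j0)ᵀ * M * (piv (b i1) j1)) *ᵥ (x - y) = 0 := by
        rw [Matrix.mulVec_sub]
        change _ *ᵥ x - _ *ᵥ y = 0
        rw [hxy, sub_self]
      exact sub_eq_zero.mp (hM'inj _ hs)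
    have hP2 : ({i0, i1} : Finset ι).card = 2 := by
      rw [Finset.card_insert_of_notMem (by simp [hne01]), Finset.card_singleton]
    have hzero : ∀ i ∈ ({i0, i1} : Finset ι), ∀ (x : Fin p → F) (y : Fin p → F),
        A i (piv (a i0) j0 *ᵥ x) * B i (piv (b i1) j1 *ᵥ y) = 0 := by
      intro i hi x y
      rcases Finset.mem_insert.mp hi with rfl | hi
      · rw [hA, dotProduct_comm, piv_dot _ _ hj0', zero_mul]
      · rw [Finset.mem_singleton] at hi
        subst hi
        rw [hB, dotProduct_comm, piv_dot _ _ hj1', mul_zero]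
    have hres := hdec.restrict ({i0, i1} : Finset ι) hP2 hK2
      (fun x => piv (a i0) j0 *ᵥ x) (fun y => piv (b i1) j1 *ᵥ y) hzero
    have hres2 := hres.congr_phi
      (fun x y => x ⬝ᵥ (((piv (a i0) j0)ᵀ * M * (piv (b i1) j1)) *ᵥ y))
      (fun x y => dot_piv_assoc _ _ _ _ _)
    have hcard' : Fintype.card {i : ι // i ∉ ({i0, i1} : Finset ι)} = Fintype.card ι - 2 := by
      rw [Fintype.card_subtype_compl]
      congr 1
      rw [← hP2]
      exact Fintype.card_coe _
    have hbound := IH {i : ι // i ∉ ({i0, i1} : Finset ι)} (K - 2)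
      (by rw [hcard']; omega)
      ((piv (a i0) j0)ᵀ * M * (piv (b i1) j1)) hM'det
      (fun i => (A i.1) ∘ₗ Matrix.mulVecLin (piv (a i0) j0))
      (fun i => (B i.1) ∘ₗ Matrix.mulVecLin (piv (b i1) j1))
      hres2
    omega
/-- Embedding of a vector as the last column of a `p × (m+1)` matrix. -/
def colE (p m : ℕ) : (Fin p → F) →ₗ[F] Matrix (Fin p) (Fin (m + 1)) F where
  toFun z := Matrix.of fun j k => if k = Fin.last m then z j else 0
  map_add' x y := by
    ext j k; by_cases hk : k = Fin.last m <;> simp [hk]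
  map_smul' c x := by
    ext j k; by_cases hk : k = Fin.last m <;> simp [hk]

@[simp] lemma colE_apply (p m : ℕ) (z : Fin p → F) (j : Fin p) (k : Fin (m + 1)) :
    colE p m z j k = if k = Fin.last m then z j else 0 := rfl

/-- Extension of a `p × m` matrix by a zero last column. -/
def ext0 (p m : ℕ) : Matrix (Fin p) (Fin m) F →ₗ[F] Matrix (Fin p) (Fin (m + 1)) F where
  toFun α := Matrix.of fun j k => if hk : (k : ℕ) < m then α j ⟨k, hk⟩ else 0
  map_add' x y := by
    ext j k; by_cases hk : (k : ℕ) < m <;> simp [hk]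
  map_smul' c x := by
    ext j k; by_cases hk : (k : ℕ) < m <;> simp [hk]

lemma ext0_castSucc (p m : ℕ) (α : Matrix (Fin p) (Fin m) F) (j : Fin p) (k : Fin m) :
    ext0 p m α j (Fin.castSucc k) = α j k := by
  have hk : ((Fin.castSucc k : Fin (m + 1)) : ℕ) < m := k.isLt
  show (if hk : ((Fin.castSucc k : Fin (m + 1)) : ℕ) < m then α j ⟨_, hk⟩ else 0) = α j k
  rw [dif_pos hk]
  congr 1

lemma ext0_last (p m : ℕ) (α : Matrix (Fin p) (Fin m) F) (j : Fin p) :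
    ext0 p m α j (Fin.last m) = 0 := by
  show (if hk : ((Fin.last m : Fin (m + 1)) : ℕ) < m then α j ⟨_, hk⟩ else 0) = 0
  rw [dif_neg]
  simp

/-- Reduction step: a decodable scheme for `p × (m+1)` times `p × n` matrix multiplication
yields one for `p × m` times `p × n` after deleting `p` suitable workers. -/
lemma redM (p m n : ℕ) (_hp : 0 < p) (hn : 0 < n) (ι : Type u_r) [Fintype ι] [DecidableEq ι]
    (K : ℕ) (hK : K < Fintype.card ι)
    (A : ι → Matrix (Fin p) (Fin (m + 1)) F →ₗ[F] F)
    (B : ι → Matrix (Fin p) (Fin n) F →ₗ[F] F)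
    (hdec : Dec F K (fun i α => A i α) (fun i β => B i β) (fun α β => αᵀ * β)) :
    p ≤ K ∧ ∃ P : Finset ι, P.card = p ∧
      ∃ (A' : {i : ι // i ∉ P} → (Matrix (Fin p) (Fin m) F →ₗ[F] F))
        (B' : {i : ι // i ∉ P} → (Matrix (Fin p) (Fin n) F →ₗ[F] F)),
        Dec F (K - p) (fun i α => A' i α) (fun i β => B' i β) (fun α β => αᵀ * β) := by
  obtain ⟨S, hSsub, hSc⟩ := Finset.exists_subset_card_eq
    (show K ≤ (Finset.univ : Finset ι).card by rw [Finset.card_univ]; omega)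
  obtain ⟨d, hd⟩ := hdec S hSc
  have claim1 : ∀ α0 : Matrix (Fin p) (Fin (m + 1)) F, (∀ i ∈ S, A i α0 = 0) → α0 = 0 := by
    intro α0 h0
    have hz : ∀ β : Matrix (Fin p) (Fin n) F, α0ᵀ * β = 0 := by
      intro β
      have e1 := hd α0 β
      have e0 := hd 0 β
      have heq : (fun i : {i // i ∈ S} => A i.1 α0 * B i.1 β)
          = fun i : {i // i ∈ S} => A i.1 (0 : Matrix (Fin p) (Fin (m + 1)) F) * B i.1 β := by
        funext i; rw [h0 i.1 i.2, map_zero]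
      rw [heq, e0] at e1
      simp only [Matrix.transpose_zero, Matrix.zero_mul] at e1
      exact e1.symm
    ext j k
    have hentry := congrFun (congrFun
      (hz (Matrix.of fun j' (_ : Fin n) => if j' = j then 1 else 0)) k) ⟨0, hn⟩
    simpa [Matrix.mul_apply, Matrix.transpose_apply, mul_ite] using hentry
  have hKp : p * (m + 1) ≤ K := by
    have hLinj : Function.Injective
        (LinearMap.pi (fun i : {i : ι // i ∈ S} => A i.1) :
          Matrix (Fin p) (Fin (m + 1)) F →ₗ[F] ({i : ι // i ∈ S} → F)) := by
      intro x y hxy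
      have hsub : x - y = 0 := by
        apply claim1
        intro i hi
        have hxy' := congrFun hxy (⟨i, hi⟩ : {i // i ∈ S})
        simp only [LinearMap.pi_apply] at hxy'
        rw [map_sub, hxy', sub_self]
      exact sub_eq_zero.mp hsub
    have hle := LinearMap.finrank_le_finrank_of_injective hLinj
    rwa [Module.finrank_matrix, Module.finrank_self, mul_one,
      Module.finrank_fintype_fun_eq_card, Fintype.card_coe, hSc,
      Fintype.card_fin, Fintype.card_fin] at hle
  have hpK : p ≤ K := le_trans (Nat.le_mul_of_pos_right p (by omega)) hKp
  have hSP : ∀ z : Fin p → F, (∀ i : {i : ι // i ∈ S}, ((A i.1) ∘ₗ colE p m) z = 0) → z = 0 := by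
    intro z hz
    have h1 : colE p m z = 0 := claim1 _ (fun i hi => hz ⟨i, hi⟩)
    funext j
    have h2 := congrFun (congrFun h1 j) (Fin.last m)
    simpa using h2
  obtain ⟨τ0, hτ0inj, hτ0ker⟩ := select (fun i : {i : ι // i ∈ S} => (A i.1) ∘ₗ colE p m) hSP
  have hτinj : Function.Injective (fun j => (τ0 j).1) :=
    fun j j' hjj => hτ0inj (Subtype.coe_injective hjj)
  set τ : Fin p → ι := fun j => (τ0 j).1 with hτdef
  have hellinj : Function.Injective
      (LinearMap.pi (fun j : Fin p => (A (τ j)) ∘ₗ colE p m) :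
        (Fin p → F) →ₗ[F] (Fin p → F)) := by
    intro x y hxy
    have hsub : x - y = 0 := by
      apply hτ0ker
      intro j
      have hxy' := congrFun hxy j
      simp only [LinearMap.pi_apply] at hxy'
      show ((A (τ j)) ∘ₗ colE p m) (x - y) = 0
      rw [map_sub, hxy', sub_self]
    exact sub_eq_zero.mp hsub
  have hellbij : Function.Bijective
      (LinearMap.pi (fun j : Fin p => (A (τ j)) ∘ₗ colE p m) :
        (Fin p → F) →ₗ[F] (Fin p → F)) :=
    ⟨hellinj, LinearMap.injective_iff_surjective.mp hellinj⟩
  set E := LinearEquiv.ofBijective _ hellbij with hEdef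
  set ρV : Matrix (Fin p) (Fin m) F →ₗ[F] Matrix (Fin p) (Fin (m + 1)) F :=
    ext0 p m + (colE p m) ∘ₗ (E.symm : (Fin p → F) →ₗ[F] (Fin p → F)) ∘ₗ
      (LinearMap.pi (fun j : Fin p => -((A (τ j)) ∘ₗ ext0 p m))) with hρVdef
  have hρV_apply : ∀ x, ρV x = ext0 p m x + colE p m (E.symm
      (LinearMap.pi (fun j : Fin p => -((A (τ j)) ∘ₗ ext0 p m)) x)) := fun x => rfl
  have hkill : ∀ (j : Fin p) (x : Matrix (Fin p) (Fin m) F), A (τ j) (ρV x) = 0 := by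
    intro j x
    rw [hρV_apply, map_add]
    have h2 : A (τ j) (colE p m (E.symm
        (LinearMap.pi (fun j : Fin p => -((A (τ j)) ∘ₗ ext0 p m)) x)))
        = (LinearMap.pi (fun j : Fin p => (A (τ j)) ∘ₗ colE p m)) (E.symm
        (LinearMap.pi (fun j : Fin p => -((A (τ j)) ∘ₗ ext0 p m)) x)) j := rfl
    have h3 : (LinearMap.pi (fun j : Fin p => (A (τ j)) ∘ₗ colE p m)) (E.symm
        (LinearMap.pi (fun j : Fin p => -((A (τ j)) ∘ₗ ext0 p m)) x))
        = LinearMap.pi (fun j : Fin p => -((A (τ j)) ∘ₗ ext0 p m)) x :=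
      E.apply_symm_apply _
    rw [h2, h3]
    show A (τ j) (ext0 p m x) + (-((A (τ j)) ∘ₗ ext0 p m)) x = 0
    simp
  have hPcard : (Finset.image τ Finset.univ).card = p := by
    rw [Finset.card_image_of_injective _ hτinj, Finset.card_univ, Fintype.card_fin]
  have hzero : ∀ i ∈ Finset.image τ Finset.univ, ∀ (x : Matrix (Fin p) (Fin m) F)
      (y : Matrix (Fin p) (Fin n) F), A i (ρV x) * B i (id y) = 0 := by
    intro i hi x y
    obtain ⟨j, _, rfl⟩ := Finset.mem_image.mp hi
    rw [hkill j x, zero_mul]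
  have hres := (hdec.restrict (Finset.image τ Finset.univ) hPcard hpK
    (fun x => ρV x) (fun y => id y) hzero).post
    (fun C : Matrix (Fin (m + 1)) (Fin n) F => Matrix.of fun k l => C (Fin.castSucc k) l)
  refine ⟨hpK, Finset.image τ Finset.univ, hPcard,
    fun i => (A i.1) ∘ₗ ρV, fun i => B i.1, ?_⟩
  apply hres.congr_phi
  intro x y
  ext k l
  show ((ρV x)ᵀ * y) (Fin.castSucc k) l = (xᵀ * y) k l
  simp only [Matrix.mul_apply, Matrix.transpose_apply]
  apply Finset.sum_congr rfl
  intro j _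
  congr 1
  rw [hρV_apply]
  show ext0 p m x j (Fin.castSucc k) + colE p m _ j (Fin.castSucc k) = x j k
  rw [ext0_castSucc, colE_apply, if_neg (Fin.ne_of_lt (Fin.castSucc_lt_last k)), add_zero]
/-- Viewing a vector as a `p × 1` matrix. -/
def vecE (p : ℕ) : (Fin p → F) →ₗ[F] Matrix (Fin p) (Fin 1) F where
  toFun x := Matrix.of fun j _ => x j
  map_add' x y := by ext j k; simp
  map_smul' c x := by ext j k; simp

@[simp] lemma vecE_apply (p : ℕ) (x : Fin p → F) (j : Fin p) (k : Fin 1) :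
    vecE p x j k = x j := rfl

lemma lemB11 (p : ℕ) (ι : Type u_b) [Fintype ι] [DecidableEq ι] (K : ℕ)
    (hK : K < Fintype.card ι)
    (A B : ι → Matrix (Fin p) (Fin 1) F →ₗ[F] F)
    (hdec : Dec F K (fun i α => A i α) (fun i β => B i β) (fun α β => αᵀ * β)) :
    2 * p ≤ K + 1 := by
  have h2 := ((hdec.comp (fun x : Fin p → F => vecE p x) (fun y : Fin p → F => vecE p y)).post
    (fun C : Matrix (Fin 1) (Fin 1) F => C 0 0)).congr_phi
    (fun x y => x ⬝ᵥ ((1 : Matrix (Fin p) (Fin p) F) *ᵥ y)) ?_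
  · exact lemA p ι K hK 1 (by simp) (fun i => (A i) ∘ₗ vecE p) (fun i => (B i) ∘ₗ vecE p) h2
  · intro x y
    show ((vecE p x)ᵀ * (vecE p y)) 0 0 = _
    simp [Matrix.mul_apply, dotProduct, one_mulVec]

lemma lemBn (n : ℕ) : ∀ (p : ℕ), 0 < p → ∀ (ι : Type u_c) [Fintype ι] [DecidableEq ι] (K : ℕ),
    K < Fintype.card ι →
    ∀ (A : ι → Matrix (Fin p) (Fin 1) F →ₗ[F] F)
      (B : ι → Matrix (Fin p) (Fin (n + 1)) F →ₗ[F] F),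
    Dec F K (fun i α => A i α) (fun i β => B i β) (fun α β => αᵀ * β) →
    p + p * (n + 1) ≤ K + 1 := by
  induction n with
  | zero =>
    intro p hp ι _ _ K hK A B hdec
    have h1 := lemB11 p ι K hK A B hdec
    omega
  | succ n IH =>
    intro p hp ι _ _ K hK A B hdec
    have hsw : Dec F K (fun i β => B i β) (fun i α => A i α)
        (fun (β : Matrix (Fin p) (Fin (n + 1 + 1)) F) (α : Matrix (Fin p) (Fin 1) F) =>
          βᵀ * α) :=
      ((hdec.swap).post (fun C => Cᵀ)).congr_phi _
        (fun y x => by rw [Matrix.transpose_mul, Matrix.transpose_transpose])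
    obtain ⟨hpK, P, hPc, B', A', hdec'⟩ := redM p (n + 1) 1 hp one_pos ι K hK B A hsw
    have hback : Dec F (K - p) (fun i α => A' i α) (fun i β => B' i β)
        (fun (α : Matrix (Fin p) (Fin 1) F) (β : Matrix (Fin p) (Fin (n + 1)) F) =>
          αᵀ * β) :=
      ((hdec'.swap).post (fun C => Cᵀ)).congr_phi _
        (fun x y => by rw [Matrix.transpose_mul, Matrix.transpose_transpose])
    have hcard' : Fintype.card {i : ι // i ∉ P} = Fintype.card ι - p := by
      rw [Fintype.card_subtype_compl]
      congr 1
      rw [← hPc]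
      exact Fintype.card_coe _
    have hb := IH p hp {i : ι // i ∉ P} (K - p) (by rw [hcard']; omega) A' B' hback
    have he : p * (n + 1 + 1) = p * (n + 1) + p := by ring
    omega

lemma lemBm (m : ℕ) : ∀ (n p : ℕ), 0 < p → ∀ (ι : Type u_d) [Fintype ι] [DecidableEq ι]
    (K : ℕ), K < Fintype.card ι →
    ∀ (A : ι → Matrix (Fin p) (Fin (m + 1)) F →ₗ[F] F)
      (B : ι → Matrix (Fin p) (Fin (n + 1)) F →ₗ[F] F),
    Dec F K (fun i α => A i α) (fun i β => B i β) (fun α β => αᵀ * β) →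
    p * (m + 1) + p * (n + 1) ≤ K + 1 := by
  induction m with
  | zero =>
    intro n p hp ι _ _ K hK A B hdec
    have h1 := lemBn n p hp ι K hK A B hdec
    have h2 : p * (0 + 1) = p := by ring
    omega
  | succ m IH =>
    intro n p hp ι _ _ K hK A B hdec
    obtain ⟨hpK, P, hPc, A', B', hdec'⟩ :=
      redM p (m + 1) (n + 1) hp (Nat.succ_pos n) ι K hK A B hdec
    have hcard' : Fintype.card {i : ι // i ∉ P} = Fintype.card ι - p := by
      rw [Fintype.card_subtype_compl]
      congr 1
      rw [← hPc]
      exact Fintype.card_coe _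
    have hb := IH n p hp {i : ι // i ∉ P} (K - p) (by rw [hcard']; omega) A' B' hdec'
    have he : p * (m + 1 + 1) = p * (m + 1) + p := by ring
    omega

end Infra

/-- Linear-code converse bound (Lemma 1): any linear code for distributed matrix
multiplication with recovery threshold `K < N` satisfies `K ≥ pm + pn - 1`. -/
theorem stmt_5 (F : Type*) [Field F] (N p m n K : ℕ)
    (hp : 0 < p) (hm : 0 < m) (hn : 0 < n) (hKN : K < N)
    (a : Fin N → Fin p → Fin m → F) (b : Fin N → Fin p → Fin n → F)
    (d : (S : Finset (Fin N)) → (({i : Fin N // i ∈ S} → F) → Matrix (Fin m) (Fin n) F))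
    (hd : ∀ S : Finset (Fin N), S.card = K →
      ∀ (α : Matrix (Fin p) (Fin m) F) (β : Matrix (Fin p) (Fin n) F),
        d S (fun i => (∑ j, ∑ k, α j k * a i.1 j k) * (∑ j, ∑ k, β j k * b i.1 j k))
          = αᵀ * β) :
    p * m + p * n - 1 ≤ K := by
  obtain ⟨m', rfl⟩ : ∃ m', m = m' + 1 := ⟨m - 1, by omega⟩
  obtain ⟨n', rfl⟩ : ∃ n', n = n' + 1 := ⟨n - 1, by omega⟩
  have hdec : Dec F K
      (fun i (α : Matrix (Fin p) (Fin (m' + 1)) F) => ∑ j, ∑ k, α j k * a i j k)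
      (fun i (β : Matrix (Fin p) (Fin (n' + 1)) F) => ∑ j, ∑ k, β j k * b i j k)
      (fun α β => αᵀ * β) := by
    intro S hS
    exact ⟨d S, fun α β => hd S hS α β⟩
  have hb := lemBm m' n' p hp (Fin N) K (by rwa [Fintype.card_fin])
    (fun i =>
      { toFun := fun α => ∑ j, ∑ k, α j k * a i j k
        map_add' := by intro x y; simp [add_mul, Finset.sum_add_distrib]
        map_smul' := by intro c x; simp [Finset.mul_sum, Matrix.smul_apply, smul_eq_mul, mul_assoc] })
    (fun i =>
      { toFun := fun β => ∑ j, ∑ k, β j k * b i j k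
        map_add' := by intro x y; simp [add_mul, Finset.sum_add_distrib]
        map_smul' := by intro c x; simp [Finset.mul_sum, Matrix.smul_apply, smul_eq_mul, mul_assoc] })
    hdec
  omega
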